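/- For every Δ ∈ ℂ, every n ∈ ℤ and every x ∈ ℝ, the function ψ_n^{(Δ)} satisfies the eigenvalue equation i·( ((1+x²)/2)·(ψ_n^{(Δ)})′(x) + Δ·x·ψ_n^{(Δ)}(x) ) = n·ψ_n^{(Δ)}(x). -/

import Mathlib

open Complex

/-- The basis wavefunction `ψ_n^{(Δ)}(x) = (2π)^{-1/2} ((1-ix)/(1+ix))^n 2^Δ (1+x²)^{-Δ}`,
with complex powers on the principal branch. -/
noncomputable def psi (Δ : ℂ) (n : ℤ) (x : ℝ) : ℂ :=
  ((Real.sqrt (2 * Real.pi) : ℂ))⁻¹ * ((1 - Complex.I * x) / (1 + Complex.I * x)) ^ n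
    * (2 : ℂ) ^ Δ * ((1 : ℂ) + (x : ℂ) ^ 2) ^ (-Δ)

/-- `ψ_n^{(Δ)}` is an eigenfunction of `L₀ = i((1+x²)/2 ∂_x + Δ x)` with eigenvalue `n`. -/
theorem stmt2 (Δ : ℂ) (n : ℤ) (x : ℝ) :
    Complex.I * (((1 + (x : ℂ) ^ 2) / 2) * deriv (psi Δ n) x + Δ * (x : ℂ) * psi Δ n x)
      = (n : ℂ) * psi Δ n x := by
  have hb : (1 + Complex.I * (x : ℂ)) ≠ 0 := by
    intro h
    have := congrArg Complex.re h
    simp [Complex.add_re, Complex.mul_re] at this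
  have ha : (1 - Complex.I * (x : ℂ)) ≠ 0 := by
    intro h
    have := congrArg Complex.re h
    simp [Complex.sub_re, Complex.mul_re] at this
  have hq : ((1 : ℂ) + (x : ℂ) ^ 2) ≠ 0 := by
    have : ((1 : ℂ) + (x : ℂ) ^ 2) = ((1 + x ^ 2 : ℝ) : ℂ) := by push_cast; ring
    rw [this]
    exact_mod_cast ne_of_gt (by positivity : (0:ℝ) < 1 + x ^ 2)
  have hw0 : ((1 - Complex.I * (x : ℂ)) / (1 + Complex.I * (x : ℂ))) ≠ 0 :=
    div_ne_zero ha hb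
  have hfac : ((1 : ℂ) + (x : ℂ) ^ 2) = (1 - Complex.I * x) * (1 + Complex.I * x) := by
    linear_combination ((x:ℂ)^2) * Complex.I_sq
  have hx : HasDerivAt (fun y : ℝ => (y : ℂ)) 1 x := by
    simpa using (hasDerivAt_id x).ofReal_comp
  have h1 : HasDerivAt (fun y : ℝ => (1 - Complex.I * (y : ℂ))) (-Complex.I) x := by
    simpa using ((hx.const_mul Complex.I).const_sub 1)
  have h2 : HasDerivAt (fun y : ℝ => (1 + Complex.I * (y : ℂ))) Complex.I x := by
    simpa using ((hx.const_mul Complex.I).const_add 1)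
  have hw : HasDerivAt (fun y : ℝ => (1 - Complex.I * (y : ℂ)) / (1 + Complex.I * (y : ℂ)))
      (((-Complex.I) * (1 + Complex.I * x) - (1 - Complex.I * x) * Complex.I) /
        (1 + Complex.I * x) ^ 2) x := h1.div h2 hb
  have hw' : HasDerivAt (fun y : ℝ => (1 - Complex.I * (y : ℂ)) / (1 + Complex.I * (y : ℂ)))
      ((-2 * Complex.I) * ((1 - Complex.I * x) / (1 + Complex.I * x)) /
        ((1 : ℂ) + (x : ℂ) ^ 2)) x := by
    convert hw using 1
    rw [hfac]
    field_simp
    ring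
  have hg : HasDerivAt (fun y : ℝ => ((1 - Complex.I * (y : ℂ)) / (1 + Complex.I * (y : ℂ))) ^ n)
      (((n : ℂ) * ((1 - Complex.I * x) / (1 + Complex.I * x)) ^ (n - 1)) *
        ((-2 * Complex.I) * ((1 - Complex.I * x) / (1 + Complex.I * x)) /
          ((1 : ℂ) + (x : ℂ) ^ 2))) x :=
    by have h := (hasDerivAt_zpow n ((1 - Complex.I * (x:ℂ)) / (1 + Complex.I * (x:ℂ))) (Or.inl hw0)).comp x hw'; exact h
  have hbase : HasDerivAt (fun y : ℝ => (1 : ℂ) + (y : ℂ) ^ 2) (2 * x) x := by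
    have h := (hx.mul hx).const_add (1 : ℂ)
    simpa [pow_two, two_mul] using h
  have h0 : ((1 : ℂ) + (x : ℂ) ^ 2) ∈ Complex.slitPlane := by
    rw [Complex.mem_slitPlane_iff]
    left
    simp only [Complex.add_re, Complex.one_re, ← Complex.ofReal_pow, Complex.ofReal_re]
    positivity
  have hh : HasDerivAt (fun y : ℝ => ((1 : ℂ) + (y : ℂ) ^ 2) ^ (-Δ))
      ((-Δ) * ((1 : ℂ) + (x : ℂ) ^ 2) ^ (-Δ - 1) * (2 * x)) x := by
    have h := ((Complex.hasStrictDerivAt_cpow_const (c := -Δ) h0).hasDerivAt).comp x hbase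
    simpa [mul_assoc, Function.comp_def] using h
  have hD : HasDerivAt (psi Δ n)
      ((((Real.sqrt (2 * Real.pi) : ℂ))⁻¹ * (((n : ℂ) *
          ((1 - Complex.I * x) / (1 + Complex.I * x)) ^ (n - 1)) *
        ((-2 * Complex.I) * ((1 - Complex.I * x) / (1 + Complex.I * x)) /
          ((1 : ℂ) + (x : ℂ) ^ 2))) * (2 : ℂ) ^ Δ) *
          (((1 : ℂ) + (x : ℂ) ^ 2) ^ (-Δ)) +
        (((Real.sqrt (2 * Real.pi) : ℂ))⁻¹ *
          ((1 - Complex.I * x) / (1 + Complex.I * x)) ^ n * (2 : ℂ) ^ Δ) *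
          ((-Δ) * ((1 : ℂ) + (x : ℂ) ^ 2) ^ (-Δ - 1) * (2 * x))) x :=
    ((hg.const_mul _).mul_const ((2:ℂ) ^ Δ)).mul hh
  have hzz : ((1 - Complex.I * (x : ℂ)) / (1 + Complex.I * (x : ℂ))) ^ (n - 1) *
      ((1 - Complex.I * (x : ℂ)) / (1 + Complex.I * (x : ℂ))) =
      ((1 - Complex.I * (x : ℂ)) / (1 + Complex.I * (x : ℂ))) ^ n := by
    rw [← zpow_add_one₀ hw0, sub_add_cancel]
  have hderiv : deriv (psi Δ n) x =
      psi Δ n x * ((-2 * Complex.I * n - 2 * Δ * x) / ((1 : ℂ) + (x : ℂ) ^ 2)) := by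
    rw [hD.deriv, Complex.cpow_sub _ _ hq, Complex.cpow_one]
    unfold psi
    linear_combination (((Real.sqrt (2 * Real.pi) : ℝ) : ℂ))⁻¹ * (2 : ℂ) ^ Δ *
      (((1 : ℂ) + (x : ℂ) ^ 2) ^ (-Δ)) * (-2 * Complex.I * (n : ℂ)) /
        ((1 : ℂ) + (x : ℂ) ^ 2) * hzz
  rw [hderiv]
  set P := psi Δ n x
  field_simp
  linear_combination (-(n:ℂ) * P) * Complex.I_sq
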